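/- arXiv:0709.2466 — 5 statements merged into one kernel-verified Lean document; each statement's English description precedes it below -/
import Mathlib

section
/- Let F be an n×n quaternion matrix that is block upper triangular with respect to a partition (n₁,…,n_s), with diagonal blocks F_{ii} = λ_i·I_{n_i} where λ₁ ≥ ⋯ ≥ λ_s are real, and such that whenever λ_i = λ_{i+1} the superdiagonal block F_{i,i+1} is an n_i×n_{i+1} upper triangular matrix (with n_i ≥ n_{i+1}) whose diagonal entries are positive real numbers. Let V be a quaternion unitary matrix. Then F′ = V*FV is block upper triangular with respect to (n₁,…,n_s) with the same diagonal blocks F′_{ii} = λ_i·I_{n_i} (with no conditions imposed on its off-diagonal blocks) if and only if V = V₁ ⊕ V₂ ⊕ ⋯ ⊕ V_s is block diagonal, where each V_i is an n_i×n_i (unitary) quaternion matrix. -/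
open Matrix
open scoped Quaternion

noncomputable section

/-- A quaternion matrix `U` is unitary if `Uᴴ * U = 1`. -/
def IsUnitaryM {m : Type*} [Fintype m] [DecidableEq m] (U : Matrix m m ℍ[ℝ]) : Prop :=
  Uᴴ * U = 1

/-- `A` and `B` are unitarily similar if `A = Uᴴ * B * U` for some unitary `U`. -/
def UnitarilySimilar {m : Type*} [Fintype m] [DecidableEq m] (A B : Matrix m m ℍ[ℝ]) : Prop :=
  ∃ U : Matrix m m ℍ[ℝ], IsUnitaryM U ∧ A = Uᴴ * B * U

/-- `λ ∈ ℍ` is a right eigenvalue of `A`: `A v = v λ` for some nonzero `v`. -/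
def IsRightEigenvalue {n : ℕ} (A : Matrix (Fin n) (Fin n) ℍ[ℝ]) (lam : ℍ[ℝ]) : Prop :=
  ∃ v : Fin n → ℍ[ℝ], v ≠ 0 ∧ A.mulVec v = fun i => v i * lam

/-- All right eigenvalues of `A` are real. -/
def HasRealSpectrum {n : ℕ} (A : Matrix (Fin n) (Fin n) ℍ[ℝ]) : Prop :=
  ∀ lam : ℍ[ℝ], IsRightEigenvalue A lam → ∃ r : ℝ, lam = (r : ℍ[ℝ])

/-- `psum sz m` is the sum of the first `m` block sizes: the starting index of block `m`. -/
def psum {s : ℕ} (sz : Fin s → ℕ) (m : ℕ) : ℕ :=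
  ∑ t ∈ Finset.range m, if h : t < s then sz ⟨t, h⟩ else 0

/-- Row/column index `r` belongs to the `i`-th diagonal block of the partition `sz`. -/
def InBlock {s : ℕ} (sz : Fin s → ℕ) (i : Fin s) (r : ℕ) : Prop :=
  psum sz i ≤ r ∧ r < psum sz ((i : ℕ) + 1)

/-- The strengthened Schur form (for real eigenvalues): block upper triangular w.r.t. the
partition `sz` with `s` diagonal blocks `lam i • I`, `lam` nonincreasing, and whenever two
consecutive eigenvalues coincide the block sizes do not increase and the superdiagonal block
is upper triangular with positive real diagonal entries. -/
def StrengthenedSchurForm {n : ℕ} (s : ℕ) (sz : Fin s → ℕ) (lam : Fin s → ℝ)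
    (F : Matrix (Fin n) (Fin n) ℍ[ℝ]) : Prop :=
  (∀ i, 0 < sz i) ∧ (∑ i, sz i) = n ∧
  (∀ i j : Fin s, i ≤ j → lam j ≤ lam i) ∧
  (∀ (r c : Fin n) (i j : Fin s), InBlock sz i r → InBlock sz j c → j < i → F r c = 0) ∧
  (∀ (r c : Fin n) (i : Fin s), InBlock sz i r → InBlock sz i c →
      F r c = if r = c then (lam i : ℍ[ℝ]) else 0) ∧
  (∀ (i : Fin s) (h : (i : ℕ) + 1 < s), lam i = lam ⟨(i : ℕ) + 1, h⟩ →
      sz ⟨(i : ℕ) + 1, h⟩ ≤ sz i ∧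
      ∀ r c : Fin n, InBlock sz i r → InBlock sz ⟨(i : ℕ) + 1, h⟩ c →
        ((c : ℕ) - psum sz ((i : ℕ) + 1) < (r : ℕ) - psum sz i → F r c = 0) ∧
        ((c : ℕ) - psum sz ((i : ℕ) + 1) = (r : ℕ) - psum sz i →
          ∃ b : ℝ, 0 < b ∧ F r c = (b : ℍ[ℝ])))

/-! ### Auxiliary lemmas -/

/-- `vecMul` as a left `ℍ`-linear map. -/
def vecMulLM {n : ℕ} (A : Matrix (Fin n) (Fin n) ℍ[ℝ]) :
    (Fin n → ℍ[ℝ]) →ₗ[ℍ[ℝ]] (Fin n → ℍ[ℝ]) where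
  toFun v := Matrix.vecMul v A
  map_add' u v := by
    funext j
    simp [Matrix.vecMul, dotProduct, add_mul, Finset.sum_add_distrib]
  map_smul' c v := by
    funext j
    simp [Matrix.vecMul, dotProduct, Finset.mul_sum, mul_assoc]

/-- Matrix rings over the quaternions are Dedekind-finite. -/
lemma mul_eq_one_comm_quat {n : ℕ} {A B : Matrix (Fin n) (Fin n) ℍ[ℝ]}
    (h : A * B = 1) : B * A = 1 := by
  have hgf : ∀ v, vecMulLM B (vecMulLM A v) = v := by
    intro v
    show Matrix.vecMul (Matrix.vecMul v A) B = v
    rw [Matrix.vecMul_vecMul, h, Matrix.vecMul_one]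
  have hinj : Function.Injective (vecMulLM A) := by
    intro u v huv
    have := congrArg (vecMulLM B) huv
    rwa [hgf, hgf] at this
  have hsurj : Function.Surjective (vecMulLM A) :=
    (LinearMap.injective_iff_surjective).mp hinj
  have hfg : ∀ v, vecMulLM A (vecMulLM B v) = v := by
    intro v
    obtain ⟨u, rfl⟩ := hsurj v
    rw [hgf]
  have key : ∀ v : Fin n → ℍ[ℝ], Matrix.vecMul v (B * A) = v := by
    intro v
    rw [← Matrix.vecMul_vecMul]
    exact hfg v
  refine Matrix.ext fun i j => ?_
  have := congrFun (key (Pi.single i 1)) j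
  simp only [Matrix.vecMul, dotProduct] at this
  rw [Finset.sum_eq_single i] at this
  · rw [Matrix.one_apply]
    simp only [Pi.single_apply, if_pos rfl, one_mul, if_true] at this
    rw [this]
    by_cases hij : i = j <;> simp [hij, eq_comm]
  · intro b _ hb; simp [Pi.single_apply, hb]
  · simp

/-- The real part of a quaternion, as an additive monoid homomorphism. -/
def reHom : ℍ[ℝ] →+ ℝ where
  toFun := QuaternionAlgebra.re
  map_zero' := rfl
  map_add' _ _ := rfl

lemma coe_sum_quat {α : Type*} (t : Finset α) (f : α → ℝ) :
    ((∑ x ∈ t, f x : ℝ) : ℍ[ℝ]) = ∑ x ∈ t, ((f x : ℝ) : ℍ[ℝ]) := by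
  rw [← Quaternion.algebraMap_def, map_sum]

namespace SchurStabAux

variable {s : ℕ}

lemma psum_le_psum (sz : Fin s → ℕ) {a b : ℕ} (h : a ≤ b) : psum sz a ≤ psum sz b :=
  Finset.sum_le_sum_of_subset (Finset.range_subset_range.mpr h)

lemma psum_succ (sz : Fin s → ℕ) {m : ℕ} (h : m < s) :
    psum sz (m + 1) = psum sz m + sz ⟨m, h⟩ := by
  rw [psum, psum, Finset.sum_range_succ, dif_pos h]

lemma psum_succ_stop (sz : Fin s → ℕ) {m : ℕ} (h : ¬ m < s) :
    psum sz (m + 1) = psum sz m := by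
  rw [psum, psum, Finset.sum_range_succ, dif_neg h, add_zero]

lemma psum_top (sz : Fin s → ℕ) : psum sz s = ∑ i, sz i := by
  rw [psum, ← Fin.sum_univ_eq_sum_range (fun t => if h : t < s then sz ⟨t, h⟩ else 0) s]
  exact Finset.sum_congr rfl fun i _ => by rw [dif_pos i.isLt]

lemma exists_inBlock (sz : Fin s → ℕ) (m : ℕ) (r : ℕ) (hr : r < psum sz m) :
    ∃ i : Fin s, InBlock sz i r := by
  induction m with
  | zero => simp [psum] at hr
  | succ m ih =>
    by_cases h : r < psum sz m
    · exact ih h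
    · push_neg at h
      have hm : m < s := by
        by_contra hm
        rw [psum_succ_stop sz hm] at hr
        omega
      exact ⟨⟨m, hm⟩, h, hr⟩

lemma inBlock_unique {sz : Fin s → ℕ} {i j : Fin s} {r : ℕ}
    (hi : InBlock sz i r) (hj : InBlock sz j r) : i = j := by
  by_contra hne
  have key : ∀ {a b : Fin s}, a < b → InBlock sz a r → InBlock sz b r → False := by
    intro a b hab ha hb
    have h1 : psum sz ((a : ℕ) + 1) ≤ psum sz (b : ℕ) := psum_le_psum sz hab
    have := ha.2
    have := hb.1
    omega
  rcases (Fin.lt_or_lt_of_ne hne) with h | h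
  · exact key h hi hj
  · exact key h hj hi

end SchurStabAux

open SchurStabAux

/-- **Transformations preserving the strengthened Schur form.**
Let `F` be in strengthened Schur form and let `V` be unitary.  Then `F' = Vᴴ F V` is block
upper triangular with the same diagonal blocks `λ_i • I_{n_i}` (with no condition on its
off-diagonal blocks) if and only if `V` is block diagonal with respect to the partition. -/
theorem strengthened_schur_stabilizer {n : ℕ} {s : ℕ} {sz : Fin s → ℕ} {lam : Fin s → ℝ}
    {F : Matrix (Fin n) (Fin n) ℍ[ℝ]} (hF : StrengthenedSchurForm s sz lam F)
    (V : Matrix (Fin n) (Fin n) ℍ[ℝ]) (hV : IsUnitaryM V) :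
    ((∀ (r c : Fin n) (i j : Fin s), InBlock sz i r → InBlock sz j c → j < i →
        (Vᴴ * F * V) r c = 0) ∧
     (∀ (r c : Fin n) (i : Fin s), InBlock sz i r → InBlock sz i c →
        (Vᴴ * F * V) r c = if r = c then (lam i : ℍ[ℝ]) else 0))
      ↔
    (∀ (r c : Fin n) (i j : Fin s), InBlock sz i r → InBlock sz j c → i ≠ j →
        V r c = 0) := by
  obtain ⟨hpos, hsum, hmono, hlow, hdiag, hsup⟩ := hF
  have hVunit : Vᴴ * V = 1 := hV
  have hn : psum sz s = n := by rw [psum_top]; exact hsum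
  have hex : ∀ r : Fin n, ∃ i, InBlock sz i (r : ℕ) := fun r =>
    exists_inBlock sz s r (by rw [hn]; exact r.2)
  choose blk hblk using hex
  have hblkeq : ∀ {r : Fin n} {i : Fin s}, InBlock sz i (r : ℕ) → blk r = i :=
    fun h => inBlock_unique (hblk _) h
  constructor
  · rintro ⟨H1, H2⟩ r0 c0 i0 j0 hir hjc hij
    have hVV : V * Vᴴ = 1 := mul_eq_one_comm_quat hVunit
    have hFV : ∀ r c : Fin n, ∑ b, F r b * V b c = ∑ b, V r b * (Vᴴ * F * V) b c := by
      intro r c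
      have h : F * V = V * (Vᴴ * F * V) := by
        simp only [← Matrix.mul_assoc]
        rw [hVV, Matrix.one_mul]
      have := congrFun (congrFun h r) c
      rwa [Matrix.mul_apply, Matrix.mul_apply] at this
    -- Step A: `V` is block lower triangular annihilated below the diagonal.
    have hA : ∀ m : ℕ, ∀ c r : Fin n, (blk c : ℕ) = m → blk c < blk r → V r c = 0 := by
      intro m
      induction m using Nat.strong_induction_on with
      | _ m IH =>
      intro c rr0 hm hlt0
      have dag : ∀ r : Fin n, blk c ≤ blk r →
          ∑ b, F r b * V b c = (lam (blk c) : ℍ[ℝ]) * V r c := by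
        intro r hr
        rw [hFV r c, Finset.sum_eq_single c]
        · rw [H2 c c (blk c) (hblk c) (hblk c), if_pos rfl]
          exact (Quaternion.coe_commutes _ _).symm
        · intro b _ hbc
          rcases lt_trichotomy ((blk b : ℕ)) ((blk c : ℕ)) with h | h | h
          · rw [IH (blk b : ℕ) (by omega) b r rfl
              (by rw [Fin.lt_def]; have := Fin.le_def.mp hr; omega), zero_mul]
          · rw [H2 b c (blk c) ((Fin.ext h : blk b = blk c) ▸ hblk b) (hblk c), if_neg hbc,
              mul_zero]
          · rw [H1 b c (blk b) (blk c) (hblk b) (hblk c) (Fin.lt_def.mpr h), mul_zero]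
        · simp
      have tail : ∀ d : ℕ, ∀ r : Fin n, s - d ≤ (blk r : ℕ) → blk c < blk r → V r c = 0 := by
        intro d
        induction d with
        | zero => intro r hr _; exact absurd (blk r).isLt (by omega)
        | succ d IHd =>
          intro r hr hlt
          by_cases hcase : s - d ≤ (blk r : ℕ)
          · exact IHd r hcase hlt
          · push_neg at hcase
            have hzero : ∀ b : Fin n, (blk r : ℕ) < (blk b : ℕ) → V b c = 0 := by
              intro b hb
              exact IHd b (by omega) (by rw [Fin.lt_def]; have := Fin.lt_def.mp hlt; omega)
            have hrow : ∑ b, F r b * V b c = F r r * V r c := by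
              rw [Finset.sum_eq_single r]
              · intro b _ hbr
                rcases lt_trichotomy ((blk b : ℕ)) ((blk r : ℕ)) with h | h | h
                · rw [hlow r b (blk r) (blk b) (hblk r) (hblk b) (Fin.lt_def.mpr h), zero_mul]
                · rw [hdiag r b (blk r) (hblk r) ((Fin.ext h : blk b = blk r) ▸ hblk b),
                    if_neg (fun hh => hbr hh.symm), zero_mul]
                · rw [hzero b h, mul_zero]
              · simp
            have hrow2 : (lam (blk r) : ℍ[ℝ]) * V r c = (lam (blk c) : ℍ[ℝ]) * V r c := by
              rw [← dag r (le_of_lt hlt), hrow,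
                hdiag r r (blk r) (hblk r) (hblk r), if_pos rfl]
            by_cases hlam : lam (blk r) = lam (blk c)
            · -- hard case: equal eigenvalues; use the superdiagonal structure
              have htn1 : 1 ≤ (blk r : ℕ) := by have := Fin.lt_def.mp hlt; omega
              have htns : (blk r : ℕ) < s := (blk r).isLt
              set p : Fin s := ⟨(blk r : ℕ) - 1, by omega⟩ with hp
              have hps : (p : ℕ) + 1 < s := by simp only [hp]; omega
              have hpt : (⟨(p : ℕ) + 1, hps⟩ : Fin s) = blk r := Fin.ext (by simp only [hp]; omega)
              have hlamp : lam p = lam (blk r) := by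
                have h1 : lam (blk r) ≤ lam p :=
                  hmono p (blk r) (by rw [Fin.le_def]; simp only [hp]; omega)
                have h2 : lam p ≤ lam (blk c) := by
                  refine hmono (blk c) p ?_
                  rw [Fin.le_def]
                  simp only [hp]
                  have := Fin.lt_def.mp hlt
                  omega
                linarith [hlam.ge, hlam.le]
              obtain ⟨hszle, htri⟩ := hsup p hps (by rw [hpt, ← hlamp])
              rw [hpt] at hszle htri
              have hpsum_eq : psum sz ((p : ℕ) + 1) = psum sz (blk r : ℕ) := by
                congr 1
                simp only [hp]
                omega
              have hpsum_succ_p : psum sz ((p : ℕ) + 1) = psum sz (p : ℕ) + sz p :=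
                psum_succ sz (by omega)
              have hpsum_succ_t : psum sz ((blk r : ℕ) + 1)
                  = psum sz (blk r : ℕ) + sz (blk r) := psum_succ sz htns
              have hcol : ∀ d2 : ℕ, ∀ b : Fin n, blk b = blk r →
                  sz (blk r) - d2 ≤ (b : ℕ) - psum sz (blk r : ℕ) → V b c = 0 := by
                intro d2
                induction d2 with
                | zero =>
                  intro b hb hge
                  exfalso
                  have h1 := (hblk b).1
                  have h2 := (hblk b).2
                  rw [hb] at h1 h2
                  omega
                | succ d2 IH2 =>
                  intro b hb hge
                  by_cases hc2 : sz (blk r) - d2 ≤ (b : ℕ) - psum sz (blk r : ℕ)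
                  · exact IH2 b hb hc2
                  · push_neg at hc2
                    have hb1 := (hblk b).1
                    have hb2 := (hblk b).2
                    rw [hb] at hb1 hb2
                    have hqlt : (b : ℕ) - psum sz (blk r : ℕ) < sz (blk r) := by omega
                    have hqp : (b : ℕ) - psum sz (blk r : ℕ) < sz p := lt_of_lt_of_le hqlt hszle
                    have hr'lt : psum sz (p : ℕ) + ((b : ℕ) - psum sz (blk r : ℕ)) < n := by
                      have h3 : psum sz ((blk r : ℕ) + 1) ≤ psum sz s := psum_le_psum sz htns
                      rw [hn] at h3
                      omega
                    set r' : Fin n := ⟨psum sz (p : ℕ) + ((b : ℕ) - psum sz (blk r : ℕ)), hr'lt⟩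
                      with hr'd
                    have hr'val : (r' : ℕ) = psum sz (p : ℕ) + ((b : ℕ) - psum sz (blk r : ℕ)) :=
                      rfl
                    have hr'blk : InBlock sz p (r' : ℕ) := by
                      refine ⟨Nat.le_add_right _ _, ?_⟩
                      rw [hpsum_succ_p, hr'val]
                      omega
                    have hne' : r' ≠ b := by
                      intro hh
                      have := congrArg Fin.val hh
                      rw [hr'val] at this
                      omega
                    have hdagr' := dag r' (by
                      rw [Fin.le_def, hblkeq hr'blk]
                      simp only [hp]
                      have := Fin.lt_def.mp hlt
                      omega)
                    have hvanish : ∀ x : Fin n, x ∈ Finset.univ →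
                        x ∉ ({r', b} : Finset (Fin n)) → F r' x * V x c = 0 := by
                      intro x _ hx
                      simp only [Finset.mem_insert, Finset.mem_singleton, not_or] at hx
                      obtain ⟨hxr', hxb⟩ := hx
                      rcases lt_trichotomy ((blk x : ℕ)) ((p : ℕ)) with h | h | h
                      · rw [hlow r' x p (blk x) hr'blk (hblk x) (Fin.lt_def.mpr h), zero_mul]
                      · rw [hdiag r' x p hr'blk ((Fin.ext h : blk x = p) ▸ hblk x),
                          if_neg (fun hh => hxr' hh.symm), zero_mul]
                      · rcases lt_trichotomy ((blk x : ℕ)) ((blk r : ℕ)) with h' | h' | h'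
                        · exfalso
                          have : (p : ℕ) = (blk r : ℕ) - 1 := by simp only [hp]
                          omega
                        · have hxblk : blk x = blk r := Fin.ext h'
                          have hx1 := (hblk x).1
                          have hx2 := (hblk x).2
                          rw [hxblk] at hx1 hx2
                          rcases lt_trichotomy ((x : ℕ) - psum sz (blk r : ℕ))
                              ((b : ℕ) - psum sz (blk r : ℕ)) with hq | hq | hq
                          · rw [(htri r' x hr'blk (hxblk ▸ hblk x)).1
                              (by rw [hpsum_eq, hr'val]; omega), zero_mul]
                          · exfalso
                            exact hxb (Fin.ext (by omega))
                          · rw [IH2 x hxblk (by omega), mul_zero]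
                        · rw [hzero x h', mul_zero]
                    have hsum2 : ∑ x, F r' x * V x c = F r' r' * V r' c + F r' b * V b c := by
                      rw [← Finset.sum_subset (Finset.subset_univ ({r', b} : Finset (Fin n)))
                        hvanish, Finset.sum_pair hne']
                    have hFr'r' : F r' r' = (lam p : ℍ[ℝ]) := by
                      rw [hdiag r' r' p hr'blk hr'blk, if_pos rfl]
                    obtain ⟨b2, hb2pos, hb2eq⟩ := (htri r' b hr'blk (hb ▸ hblk b)).2
                      (by rw [hpsum_eq, hr'val]; omega)
                    have hkey : (b2 : ℍ[ℝ]) * V b c = 0 := by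
                      have hthis := hdagr'
                      rw [hsum2, hFr'r', hb2eq, hlamp, hlam] at hthis
                      exact add_eq_left.mp hthis
                    rcases mul_eq_zero.mp hkey with h | h
                    · exfalso
                      rw [← Quaternion.coe_zero, Quaternion.coe_inj] at h
                      exact hb2pos.ne' h
                    · exact h
              exact hcol (sz (blk r)) r rfl (by omega)
            · -- distinct eigenvalues
              have hsub : ((lam (blk r) - lam (blk c) : ℝ) : ℍ[ℝ]) * V r c = 0 := by
                rw [Quaternion.coe_sub, sub_mul, hrow2, sub_self]
              rcases mul_eq_zero.mp hsub with h | h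
              · exfalso
                rw [← Quaternion.coe_zero, Quaternion.coe_inj] at h
                exact hlam (by linarith [sub_eq_zero.mp h])
              · exact h
      exact tail s rr0 (by omega) hlt0
    have hA' : ∀ r c : Fin n, blk c < blk r → V r c = 0 := fun r c h =>
      hA (blk c : ℕ) c r rfl h
    -- Step B: a block lower-triangular-vanishing unitary matrix is block diagonal.
    have rowsum : ∀ r : Fin n, ∑ c, Quaternion.normSq (V r c) = 1 := by
      intro r
      have h : (V * Vᴴ) r r = (1 : Matrix (Fin n) (Fin n) ℍ[ℝ]) r r := by rw [hVV]
      rw [Matrix.mul_apply, Matrix.one_apply_eq] at h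
      have h2 : ∑ c, ((Quaternion.normSq (V r c) : ℝ) : ℍ[ℝ]) = 1 := by
        rw [← h]
        refine Finset.sum_congr rfl fun c _ => ?_
        rw [Matrix.conjTranspose_apply]
        exact (Quaternion.self_mul_star _).symm
      have h3 : ((∑ c, Quaternion.normSq (V r c) : ℝ) : ℍ[ℝ]) = ((1 : ℝ) : ℍ[ℝ]) := by
        rw [coe_sum_quat, Quaternion.coe_one]
        exact h2
      exact Quaternion.coe_inj.mp h3
    have colsum : ∀ c : Fin n, ∑ r, Quaternion.normSq (V r c) = 1 := by
      intro c
      have h : (Vᴴ * V) c c = (1 : Matrix (Fin n) (Fin n) ℍ[ℝ]) c c := by rw [hVunit]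
      rw [Matrix.mul_apply, Matrix.one_apply_eq] at h
      have h2 : ∑ r, ((Quaternion.normSq (V r c) : ℝ) : ℍ[ℝ]) = 1 := by
        rw [← h]
        refine Finset.sum_congr rfl fun r _ => ?_
        rw [Matrix.conjTranspose_apply]
        exact (Quaternion.star_mul_self _).symm
      have h3 : ((∑ r, Quaternion.normSq (V r c) : ℝ) : ℍ[ℝ]) = ((1 : ℝ) : ℍ[ℝ]) := by
        rw [coe_sum_quat, Quaternion.coe_one]
        exact h2
      exact Quaternion.coe_inj.mp h3
    have hB : ∀ r c : Fin n, blk r < blk c → V r c = 0 := by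
      intro rB cB hltB
      classical
      set S : Finset (Fin n) := Finset.univ.filter (fun x => blk x ≤ blk rB) with hS
      have hmemS : ∀ x : Fin n, x ∈ S ↔ blk x ≤ blk rB := by
        intro x; simp [hS]
      have hmemSc : ∀ x : Fin n, x ∈ Sᶜ ↔ ¬ blk x ≤ blk rB := by
        intro x; simp [hS]
      have T1 : ∑ r ∈ S, ∑ c, Quaternion.normSq (V r c) = (S.card : ℝ) := by
        rw [Finset.sum_congr rfl fun r _ => rowsum r]
        simp
      have T2 : ∑ c ∈ S, ∑ r, Quaternion.normSq (V r c) = (S.card : ℝ) := by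
        rw [Finset.sum_congr rfl fun c _ => colsum c]
        simp
      have T2' : ∑ c ∈ S, ∑ r ∈ S, Quaternion.normSq (V r c) = (S.card : ℝ) := by
        rw [← T2]
        refine Finset.sum_congr rfl fun c hc => ?_
        rw [← Finset.sum_add_sum_compl S (fun r => Quaternion.normSq (V r c))]
        have hz : ∑ r ∈ Sᶜ, Quaternion.normSq (V r c) = 0 := by
          refine Finset.sum_eq_zero fun r hr => ?_
          have hr' : ¬ blk r ≤ blk rB := (hmemSc r).mp hr
          have hc' : blk c ≤ blk rB := (hmemS c).mp hc
          rw [hA' r c (lt_of_le_of_lt hc' (not_le.mp hr'))]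
          simp
        rw [hz, add_zero]
      have T1' : ∑ r ∈ S, ∑ c ∈ Sᶜ, Quaternion.normSq (V r c) = 0 := by
        have e1 : (S.card : ℝ) = ∑ r ∈ S, ∑ c ∈ S, Quaternion.normSq (V r c)
            + ∑ r ∈ S, ∑ c ∈ Sᶜ, Quaternion.normSq (V r c) := by
          rw [← Finset.sum_add_distrib, ← T1]
          exact Finset.sum_congr rfl fun r _ =>
            (Finset.sum_add_sum_compl S (fun c => Quaternion.normSq (V r c))).symm
        have e2 : ∑ r ∈ S, ∑ c ∈ S, Quaternion.normSq (V r c) = (S.card : ℝ) := by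
          rw [Finset.sum_comm]
          exact T2'
        rw [e2] at e1
        linarith
      have h1 : ∀ r ∈ S, (0 : ℝ) ≤ ∑ c ∈ Sᶜ, Quaternion.normSq (V r c) := fun r _ =>
        Finset.sum_nonneg fun c _ => Quaternion.normSq_nonneg
      have h2 := (Finset.sum_eq_zero_iff_of_nonneg h1).mp T1' rB ((hmemS rB).mpr le_rfl)
      have h3 := (Finset.sum_eq_zero_iff_of_nonneg
        (fun c _ => Quaternion.normSq_nonneg)).mp h2 cB
        ((hmemSc cB).mpr (not_le.mpr hltB))
      exact Quaternion.normSq_eq_zero.mp h3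
    have hne : blk r0 ≠ blk c0 := by
      rw [hblkeq hir, hblkeq hjc]
      exact hij
    rcases hne.lt_or_gt with h | h
    · exact hB r0 c0 h
    · exact hA' r0 c0 h
  · intro hbd
    have hbd' : ∀ r c : Fin n, blk r ≠ blk c → V r c = 0 := fun r c h =>
      hbd r c _ _ (hblk r) (hblk c) h
    constructor
    · intro r c i j hir hjc hji
      have hbr : blk r = i := hblkeq hir
      have hbc : blk c = j := hblkeq hjc
      rw [Matrix.mul_apply]
      refine Finset.sum_eq_zero fun b _ => ?_
      by_cases hb : blk b = j
      · rw [Matrix.mul_apply]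
        have : ∀ a : Fin n, Vᴴ r a * F a b = 0 := by
          intro a
          by_cases ha : blk a = i
          · rw [hlow a b i j (ha ▸ hblk a) (hb ▸ hblk b) hji, mul_zero]
          · rw [Matrix.conjTranspose_apply, hbd' a r (by rw [hbr]; exact ha),
              star_zero, zero_mul]
        rw [Finset.sum_eq_zero fun a _ => this a, zero_mul]
      · rw [hbd' b c (by rw [hbc]; exact hb), mul_zero]
    · intro r c i hir hic
      have hbr : blk r = i := hblkeq hir
      have hbc : blk c = i := hblkeq hic
      rw [Matrix.mul_apply]
      have claim : ∀ b : Fin n, (Vᴴ * F) r b * V b c = ((lam i : ℍ[ℝ]) * Vᴴ r b) * V b c := by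
        intro b
        by_cases hb : blk b = i
        · congr 1
          rw [Matrix.mul_apply]
          rw [Finset.sum_eq_single b]
          · rw [hdiag b b i (hb ▸ hblk b) (hb ▸ hblk b), if_pos rfl]
            exact (Quaternion.coe_commutes _ _).symm
          · intro a _ hab
            by_cases ha : blk a = i
            · rw [hdiag a b i (ha ▸ hblk a) (hb ▸ hblk b), if_neg hab, mul_zero]
            · rw [Matrix.conjTranspose_apply, hbd' a r (by rw [hbr]; exact ha),
                star_zero, zero_mul]
          · simp
        · rw [hbd' b c (by rw [hbc]; exact hb), mul_zero, mul_zero]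
      rw [Finset.sum_congr rfl fun b _ => claim b]
      have : ∑ b, ((lam i : ℍ[ℝ]) * Vᴴ r b) * V b c
          = (lam i : ℍ[ℝ]) * ∑ b, Vᴴ r b * V b c := by
        rw [Finset.mul_sum]
        exact Finset.sum_congr rfl fun b _ => (mul_assoc _ _ _)
      rw [this, ← Matrix.mul_apply, hVunit, Matrix.one_apply]
      by_cases hrc : r = c <;> simp [hrc]
end
end

section
/- Let m₁ ≥ m₂ ≥ ⋯ ≥ m_k be positive integers, let s = m₁, and for 1 ≤ i ≤ s let r_i be the number of indices j with m_j ≥ i (so (r₁,…,r_s) is the conjugate partition of (m₁,…,m_k)). Then the quaternion matrix A = J_{m₁}(0) ⊕ J_{m₂}(0) ⊕ ⋯ ⊕ J_{m_k}(0) is similar over ℍ to the block matrix B that is block upper bidiagonal with respect to the partition (r₁,…,r_s): its diagonal blocks are zero blocks of sizes r₁,…,r_s, its superdiagonal blocks are G_{i,i+1} = [I_{r_{i+1}}; 0] of size r_i×r_{i+1} (identity on top, zeros below), and all other blocks are zero. -/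
open Matrix
open scoped Quaternion

noncomputable section

/-- The direct sum of nilpotent Jordan blocks `J_{m 0}(0) ⊕ ⋯ ⊕ J_{m (k-1)}(0)`,
indexed by the sigma type `Σ t, Fin (m t)`: entry `((t,a),(u,b))` is `1` iff `t = u` and
`b = a + 1` (ones on the superdiagonal of each block). -/
def jordanNilpotent {k : ℕ} (m : Fin k → ℕ) :
    Matrix (Σ t : Fin k, Fin (m t)) (Σ t : Fin k, Fin (m t)) ℍ[ℝ] :=
  fun x y => if x.1 = y.1 ∧ (y.2 : ℕ) = (x.2 : ℕ) + 1 then 1 else 0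

/-- The block matrix `B`: zero diagonal blocks of sizes `r 0, …, r (s-1)`, superdiagonal
blocks `G_{i,i+1} = [I_{r_{i+1}}; 0]` (identity on top, zeros below) of size
`r_i × r_{i+1}`, and all other blocks zero.  Entry `((i,a),(j,b))` is `1` iff
`j = i + 1` and `a = b`. -/
def weyrMatrix {s : ℕ} (r : Fin s → ℕ) :
    Matrix (Σ i : Fin s, Fin (r i)) (Σ i : Fin s, Fin (r i)) ℍ[ℝ] :=
  fun x y => if (y.1 : ℕ) = (x.1 : ℕ) + 1 ∧ (x.2 : ℕ) = (y.2 : ℕ) then 1 else 0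

/-- **Lemma 2.1.** Let `m 0 ≥ m 1 ≥ ⋯ ≥ m (k-1)` be positive integers, `s = m 0`, and let
`r i` be the number of indices `j` with `m j ≥ i + 1` (the conjugate partition).  Then the
direct sum of Jordan blocks `J_{m t}(0)` is similar over `ℍ` to the block matrix `B` with
zero diagonal blocks of sizes `r i` and superdiagonal blocks `[I; 0]` (a permutation of the
index set is needed to identify the two index types). -/
theorem jordan_similar_weyr (k : ℕ) (hk : 0 < k) (m : Fin k → ℕ) (hpos : ∀ t, 0 < m t)
    (hmono : ∀ t u : Fin k, t ≤ u → m u ≤ m t) (s : ℕ) (hs : s = m ⟨0, hk⟩)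
    (r : Fin s → ℕ)
    (hr : ∀ i : Fin s, r i = (Finset.univ.filter fun j : Fin k => (i : ℕ) < m j).card) :
    ∃ (e : (Σ t : Fin k, Fin (m t)) ≃ (Σ i : Fin s, Fin (r i)))
      (S : (Matrix (Σ t : Fin k, Fin (m t)) (Σ t : Fin k, Fin (m t)) ℍ[ℝ])ˣ),
      jordanNilpotent m = (S⁻¹).val * ((weyrMatrix r).submatrix e e) * S.val := by
  -- key fact 1: if a < m t then t < r a
  have key1 : ∀ (t : Fin k) (a : ℕ), a < m t →
      (t : ℕ) < (Finset.univ.filter fun j : Fin k => a < m j).card := by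
    intro t a ha
    have hsub : Finset.Iic t ⊆ Finset.univ.filter fun j : Fin k => a < m j := by
      intro j hj
      simp only [Finset.mem_Iic] at hj
      simp only [Finset.mem_filter, Finset.mem_univ, true_and]
      exact lt_of_lt_of_le ha (hmono j t hj)
    have := Finset.card_le_card hsub
    rw [Fin.card_Iic] at this
    omega
  -- key fact 2: if b < r i then i < m b
  have key2 : ∀ (i : ℕ) (b : Fin k),
      (b : ℕ) < (Finset.univ.filter fun j : Fin k => i < m j).card → i < m b := by
    intro i b hb
    by_contra h
    push_neg at h
    have hsub : (Finset.univ.filter fun j : Fin k => i < m j) ⊆ Finset.Iio b := by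
      intro j hj
      simp only [Finset.mem_filter, Finset.mem_univ, true_and] at hj
      simp only [Finset.mem_Iio]
      by_contra hle
      push_neg at hle
      exact absurd (le_trans (hmono b j hle) h) (not_le.mpr hj)
    have := Finset.card_le_card hsub
    rw [Fin.card_Iio] at this
    omega
  have ha_lt_s : ∀ (t : Fin k) (a : Fin (m t)), (a : ℕ) < s := by
    intro t a
    rw [hs]
    exact lt_of_lt_of_le a.isLt (hmono ⟨0, hk⟩ t (Fin.mk_le_of_le_val (Nat.zero_le _)))
  have hcard : ∀ (i : Fin s) (b : Fin (r i)),
      (b : ℕ) < (Finset.univ.filter fun j : Fin k => (i : ℕ) < m j).card :=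
    fun i b => lt_of_lt_of_le b.isLt (le_of_eq (hr i))
  have inv1 : ∀ (i : Fin s) (b : Fin (r i)), (b : ℕ) < k := by
    intro i b
    have h2 : (Finset.univ.filter fun j : Fin k => (i : ℕ) < m j).card ≤ k := by
      simpa using Finset.card_filter_le Finset.univ (fun j : Fin k => (i : ℕ) < m j)
    exact lt_of_lt_of_le (hcard i b) h2
  have inv2 : ∀ (i : Fin s) (b : Fin (r i)), (i : ℕ) < m ⟨(b : ℕ), inv1 i b⟩ :=
    fun i b => key2 (i : ℕ) ⟨(b : ℕ), inv1 i b⟩ (hcard i b)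
  refine ⟨⟨fun x => ⟨⟨(x.2 : ℕ), ha_lt_s x.1 x.2⟩,
      ⟨(x.1 : ℕ), by rw [hr]; exact key1 x.1 x.2 x.2.isLt⟩⟩,
    fun y => ⟨⟨(y.2 : ℕ), inv1 y.1 y.2⟩, ⟨(y.1 : ℕ), inv2 y.1 y.2⟩⟩,
    fun x => rfl, fun y => rfl⟩, 1, ?_⟩
  simp only [inv_one, Units.val_one, Matrix.one_mul, Matrix.mul_one]
  funext x y
  simp only [jordanNilpotent, weyrMatrix, Matrix.submatrix_apply, Equiv.coe_fn_mk]
  have hiff : (x.1 = y.1 ∧ (y.2 : ℕ) = (x.2 : ℕ) + 1) ↔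
      ((y.2 : ℕ) = (x.2 : ℕ) + 1 ∧ (x.1 : ℕ) = (y.1 : ℕ)) := by
    constructor
    · rintro ⟨h1, h2⟩
      exact ⟨h2, congrArg Fin.val h1⟩
    · rintro ⟨h1, h2⟩
      exact ⟨Fin.ext h2, h1⟩
  rw [if_congr hiff rfl rfl]
end
end

section
/- Let m₁ ≥ m₂ ≥ ⋯ ≥ m_k be positive integers, let s = m₁, and for 1 ≤ i ≤ s let r_i be the number of indices j with m_j ≥ i. Then the matrices A = J_{m₁}(0) ⊕ ⋯ ⊕ J_{m_k}(0) and B (the block matrix with zero diagonal blocks of sizes r₁,…,r_s, superdiagonal blocks G_{i,i+1} = [I_{r_{i+1}}; 0] of size r_i×r_{i+1}, and all other blocks zero) are permutation similar: there is a permutation matrix P with B = Pᵀ A P. -/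
open Matrix
open scoped Quaternion

noncomputable section

/-- **Remark 2.1.** With the notation of Lemma 2.1, the matrices `A = ⊕ J_{m t}(0)` and `B`
(the Weyr-form block matrix) are in fact permutation similar: `B = Pᵀ A P`, i.e. `B` is
obtained from `A` by a simultaneous permutation of rows and columns. -/
theorem jordan_permutation_similar_weyr (k : ℕ) (hk : 0 < k) (m : Fin k → ℕ)
    (hpos : ∀ t, 0 < m t) (hmono : ∀ t u : Fin k, t ≤ u → m u ≤ m t)
    (s : ℕ) (hs : s = m ⟨0, hk⟩) (r : Fin s → ℕ)
    (hr : ∀ i : Fin s, r i = (Finset.univ.filter fun j : Fin k => (i : ℕ) < m j).card) :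
    ∃ e : (Σ i : Fin s, Fin (r i)) ≃ (Σ t : Fin k, Fin (m t)),
      weyrMatrix r = (jordanNilpotent m).submatrix e e := by
  have key : ∀ (i : Fin s) (j : Fin k), (j : ℕ) < r i ↔ (i : ℕ) < m j := by
    intro i j
    rw [hr i]
    constructor
    · intro h
      by_contra hnp
      push_neg at hnp
      have hsub : (Finset.univ.filter fun u : Fin k => (i : ℕ) < m u) ⊆ Finset.Iio j := by
        intro u hu
        simp only [Finset.mem_filter] at hu
        simp only [Finset.mem_Iio]
        by_contra hju
        push_neg at hju
        exact absurd (lt_of_lt_of_le hu.2 (hmono j u hju)) (not_lt.2 hnp)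
      have := Finset.card_le_card hsub
      rw [Fin.card_Iio] at this
      omega
    · intro h
      have hsub : Finset.Iic j ⊆ (Finset.univ.filter fun u : Fin k => (i : ℕ) < m u) := by
        intro u hu
        simp only [Finset.mem_Iic] at hu
        simp only [Finset.mem_filter, Finset.mem_univ, true_and]
        exact lt_of_lt_of_le h (hmono u j hu)
      have := Finset.card_le_card hsub
      rw [Fin.card_Iic] at this
      omega
  have hrk : ∀ i : Fin s, r i ≤ k := by
    intro i
    rw [hr i]
    calc (Finset.univ.filter fun j : Fin k => (i : ℕ) < m j).card
        ≤ (Finset.univ : Finset (Fin k)).card := Finset.card_le_card (Finset.filter_subset _ _)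
      _ = k := by simp
  have hak : ∀ (x : Σ i : Fin s, Fin (r i)), (x.2 : ℕ) < k :=
    fun x => lt_of_lt_of_le x.2.2 (hrk x.1)
  have him : ∀ (x : Σ i : Fin s, Fin (r i)), (x.1 : ℕ) < m ⟨x.2, hak x⟩ :=
    fun x => (key x.1 ⟨x.2, hak x⟩).1 x.2.2
  have hcs : ∀ (y : Σ t : Fin k, Fin (m t)), (y.2 : ℕ) < s := by
    intro y
    have : m y.1 ≤ m ⟨0, hk⟩ := hmono ⟨0, hk⟩ y.1 (Fin.mk_le_of_le_val (Nat.zero_le _))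
    omega
  have htr : ∀ (y : Σ t : Fin k, Fin (m t)), (y.1 : ℕ) < r ⟨y.2, hcs y⟩ :=
    fun y => (key ⟨y.2, hcs y⟩ y.1).2 y.2.2
  refine ⟨⟨fun x => ⟨⟨x.2, hak x⟩, ⟨x.1, him x⟩⟩, fun y => ⟨⟨y.2, hcs y⟩, ⟨y.1, htr y⟩⟩,
    ?_, ?_⟩, ?_⟩
  · rintro ⟨i, a⟩; rfl
  · rintro ⟨t, c⟩; rfl
  · apply Matrix.ext
    intro x y
    simp only [weyrMatrix, jordanNilpotent, Matrix.submatrix_apply, Equiv.coe_fn_mk]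
    have hiff : ((y.1 : ℕ) = (x.1 : ℕ) + 1 ∧ (x.2 : ℕ) = (y.2 : ℕ)) ↔
        ((⟨(x.2 : ℕ), hak x⟩ : Fin k) = ⟨(y.2 : ℕ), hak y⟩ ∧ (y.1 : ℕ) = (x.1 : ℕ) + 1) := by
      constructor
      · rintro ⟨h1, h2⟩
        exact ⟨Fin.ext h2, h1⟩
      · rintro ⟨h1, h2⟩
        exact ⟨h2, congrArg Fin.val h1⟩
    rw [if_congr hiff rfl rfl]
end
end

section
/- For n×n quaternion matrices A and B, define the 3n×3n block matrices M_A = [[3I_n, I_n, A],[0, 2I_n, I_n],[0, 0, I_n]] and M_B = [[3I_n, I_n, B],[0, 2I_n, I_n],[0, 0, I_n]]. Then M_A is unitarily similar to M_B if and only if A is unitarily similar to B. Moreover, every quaternion unitary V with V*M_A V = M_B has the form V = V₁ ⊕ V₁ ⊕ V₁ for some n×n unitary V₁ satisfying V₁*AV₁ = B. -/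
open Matrix
open scoped Quaternion

noncomputable section

/-- The block matrix `M_A = [[3I, I, A],[0, 2I, I],[0, 0, I]]`, indexed by
`Fin 3 × Fin n` (first coordinate = block row/column). -/
def triBlock {n : ℕ} (A : Matrix (Fin n) (Fin n) ℍ[ℝ]) :
    Matrix (Fin 3 × Fin n) (Fin 3 × Fin n) ℍ[ℝ] :=
  fun x y =>
    let d : ℍ[ℝ] := if x.2 = y.2 then 1 else 0
    if x.1 = 0 ∧ y.1 = 0 then 3 * d
    else if x.1 = 0 ∧ y.1 = 1 then d
    else if x.1 = 0 ∧ y.1 = 2 then A x.2 y.2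
    else if x.1 = 1 ∧ y.1 = 1 then 2 * d
    else if x.1 = 1 ∧ y.1 = 2 then d
    else if x.1 = 2 ∧ y.1 = 2 then d
    else 0

/- ### Auxiliary lemmas -/

theorem quat_mul_eq_one_comm {m : Type*} [Fintype m] [DecidableEq m]
    {X Y : Matrix m m ℍ[ℝ]} (h : X * Y = 1) :
    Y * X = 1 := by
  have key : Y.vecMulLinear * X.vecMulLinear = 1 := by
    apply LinearMap.ext
    intro v
    show (v ᵥ* X) ᵥ* Y = v
    rw [Matrix.vecMul_vecMul, h, Matrix.vecMul_one]
  have key2 := mul_eq_one_symm key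
  refine Matrix.ext fun i j => ?_
  have := congrFun (LinearMap.congr_fun key2 (Pi.single i 1)) j
  simp only [Module.End.mul_apply, Matrix.vecMulLinear_apply, Matrix.vecMul_vecMul,
    Module.End.one_apply, Matrix.single_one_vecMul] at this
  simp only [Matrix.vecMul, dotProduct, Pi.single_apply, Matrix.row] at this
  rw [Matrix.mul_apply, this]
  simp [Matrix.one_apply, Pi.single_apply, eq_comm]

/-- The `(p,q)` block of a `3n × 3n` matrix. -/
def blk {n : ℕ} (M : Matrix (Fin 3 × Fin n) (Fin 3 × Fin n) ℍ[ℝ]) (p q : Fin 3) :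
    Matrix (Fin n) (Fin n) ℍ[ℝ] :=
  fun i j => M (p, i) (q, j)

theorem blk_ext {n : ℕ} {M N : Matrix (Fin 3 × Fin n) (Fin 3 × Fin n) ℍ[ℝ]}
    (h : ∀ p q, blk M p q = blk N p q) : M = N := by
  funext x y
  exact congrFun (congrFun (h x.1 y.1) x.2) y.2

theorem blk_mul {n : ℕ} (M N : Matrix (Fin 3 × Fin n) (Fin 3 × Fin n) ℍ[ℝ]) (p q : Fin 3) :
    blk (M * N) p q =
      blk M p 0 * blk N 0 q + blk M p 1 * blk N 1 q + blk M p 2 * blk N 2 q := by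
  funext i j
  simp [blk, Matrix.mul_apply, Fintype.sum_prod_type, Fin.sum_univ_three, Matrix.add_apply]

theorem blk_conjTranspose {n : ℕ} (M : Matrix (Fin 3 × Fin n) (Fin 3 × Fin n) ℍ[ℝ])
    (p q : Fin 3) : blk Mᴴ p q = (blk M q p)ᴴ := rfl

theorem blk_one {n : ℕ} (p q : Fin 3) :
    blk (1 : Matrix (Fin 3 × Fin n) (Fin 3 × Fin n) ℍ[ℝ]) p q = if p = q then 1 else 0 := by
  funext i j
  by_cases h : p = q <;> simp [blk, Matrix.one_apply, Prod.ext_iff, h]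

section blkTri
variable {n : ℕ} (A : Matrix (Fin n) (Fin n) ℍ[ℝ])

theorem blk_tri00 : blk (triBlock A) 0 0 = (3 : ℝ) • 1 := by
  funext i j
  by_cases h : i = j <;>
    simp [blk, triBlock, Matrix.one_apply, h]
  norm_num [Algebra.smul_def, ← Quaternion.coe_natCast]
  rfl
theorem blk_tri01 : blk (triBlock A) 0 1 = 1 := by
  funext i j; by_cases h : i = j <;> simp [blk, triBlock, Matrix.one_apply, h]
theorem blk_tri02 : blk (triBlock A) 0 2 = A := by
  funext i j; simp [blk, triBlock]
theorem blk_tri10 : blk (triBlock A) 1 0 = 0 := by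
  funext i j; simp [blk, triBlock]
theorem blk_tri11 : blk (triBlock A) 1 1 = (2 : ℝ) • 1 := by
  funext i j
  by_cases h : i = j <;>
    simp [blk, triBlock, Matrix.one_apply, h]
  norm_num [Algebra.smul_def, ← Quaternion.coe_natCast]
  rfl
theorem blk_tri12 : blk (triBlock A) 1 2 = 1 := by
  funext i j; by_cases h : i = j <;> simp [blk, triBlock, Matrix.one_apply, h]
theorem blk_tri20 : blk (triBlock A) 2 0 = 0 := by
  funext i j; simp [blk, triBlock]
theorem blk_tri21 : blk (triBlock A) 2 1 = 0 := by
  funext i j; simp [blk, triBlock]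
theorem blk_tri22 : blk (triBlock A) 2 2 = 1 := by
  funext i j; by_cases h : i = j <;> simp [blk, triBlock, Matrix.one_apply, h]

end blkTri

theorem key_lemma {n : ℕ} (A B : Matrix (Fin n) (Fin n) ℍ[ℝ])
    (V : Matrix (Fin 3 × Fin n) (Fin 3 × Fin n) ℍ[ℝ]) (hV : IsUnitaryM V)
    (hsim : Vᴴ * triBlock A * V = triBlock B) :
    ∃ V₁ : Matrix (Fin n) (Fin n) ℍ[ℝ], IsUnitaryM V₁ ∧ V₁ᴴ * A * V₁ = B ∧
      V = fun x y => if x.1 = y.1 then V₁ x.2 y.2 else 0 := by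
  have hVeq : Vᴴ * V = 1 := hV
  have hV' : V * Vᴴ = 1 := quat_mul_eq_one_comm hVeq
  have hMV : triBlock A * V = V * triBlock B := by
    have := congrArg (fun M => V * M) hsim
    simpa [← mul_assoc, hV'] using this
  have hb : ∀ p q : Fin 3,
      blk (triBlock A) p 0 * blk V 0 q + blk (triBlock A) p 1 * blk V 1 q +
        blk (triBlock A) p 2 * blk V 2 q =
      blk V p 0 * blk (triBlock B) 0 q + blk V p 1 * blk (triBlock B) 1 q +
        blk V p 2 * blk (triBlock B) 2 q := by
    intro p q
    rw [← blk_mul, ← blk_mul, hMV]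
  have hu : ∀ p q : Fin 3,
      (blk V 0 p)ᴴ * blk V 0 q + (blk V 1 p)ᴴ * blk V 1 q + (blk V 2 p)ᴴ * blk V 2 q =
        if p = q then 1 else 0 := by
    intro p q
    rw [← blk_conjTranspose, ← blk_conjTranspose, ← blk_conjTranspose, ← blk_mul, hVeq, blk_one]
  -- lower blocks vanish
  have hV20 : blk V 2 0 = 0 := by
    have e := hb 2 0
    simp only [blk_tri00, blk_tri01, blk_tri02, blk_tri10, blk_tri11, blk_tri12, blk_tri20, blk_tri21, blk_tri22,
      zero_mul, mul_zero, one_mul, zero_add, add_zero, mul_smul_comm, mul_one] at e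
    have e2 : ((3 : ℝ) - 1) • blk V 2 0 = 0 := by
      rw [sub_smul, one_smul, ← e, sub_self]
    rcases smul_eq_zero.mp e2 with h | h
    · norm_num at h
    · exact h
  have hV10 : blk V 1 0 = 0 := by
    have e := hb 1 0
    simp only [blk_tri00, blk_tri01, blk_tri02, blk_tri10, blk_tri11, blk_tri12, blk_tri20, blk_tri21, blk_tri22, hV20,
      zero_mul, mul_zero, one_mul, zero_add, add_zero, smul_mul_assoc, mul_smul_comm,
      mul_one, one_smul] at e
    have e2 : ((3 : ℝ) - 2) • blk V 1 0 = 0 := by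
      rw [sub_smul, ← e, sub_self]
    rcases smul_eq_zero.mp e2 with h | h
    · norm_num at h
    · exact h
  have hV21 : blk V 2 1 = 0 := by
    have e := hb 2 1
    simp only [blk_tri00, blk_tri01, blk_tri02, blk_tri10, blk_tri11, blk_tri12, blk_tri20, blk_tri21, blk_tri22, hV20,
      zero_mul, mul_zero, one_mul, zero_add, add_zero, mul_smul_comm, mul_one] at e
    have e2 : ((2 : ℝ) - 1) • blk V 2 1 = 0 := by
      rw [sub_smul, one_smul, ← e, sub_self]
    rcases smul_eq_zero.mp e2 with h | h
    · norm_num at h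
    · exact h
  -- unitarity of the diagonal blocks, vanishing of the upper blocks
  have hU00 : (blk V 0 0)ᴴ * blk V 0 0 = 1 := by
    have e := hu 0 0
    simpa [hV10, hV20] using e
  have hU00' : blk V 0 0 * (blk V 0 0)ᴴ = 1 := quat_mul_eq_one_comm hU00
  have hV01 : blk V 0 1 = 0 := by
    have e := hu 0 1
    simp only [hV10, hV20, hV21, conjTranspose_zero, zero_mul, mul_zero, add_zero,
      if_neg (by decide : ¬ (0 : Fin 3) = 1)] at e
    calc blk V 0 1 = (blk V 0 0 * (blk V 0 0)ᴴ) * blk V 0 1 := by rw [hU00', one_mul]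
      _ = blk V 0 0 * ((blk V 0 0)ᴴ * blk V 0 1) := by rw [mul_assoc]
      _ = 0 := by rw [e, mul_zero]
  have hV02 : blk V 0 2 = 0 := by
    have e := hu 0 2
    simp only [hV10, hV20, conjTranspose_zero, zero_mul, mul_zero, add_zero,
      if_neg (by decide : ¬ (0 : Fin 3) = 2)] at e
    calc blk V 0 2 = (blk V 0 0 * (blk V 0 0)ᴴ) * blk V 0 2 := by rw [hU00', one_mul]
      _ = blk V 0 0 * ((blk V 0 0)ᴴ * blk V 0 2) := by rw [mul_assoc]
      _ = 0 := by rw [e, mul_zero]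
  have hU11 : (blk V 1 1)ᴴ * blk V 1 1 = 1 := by
    have e := hu 1 1
    simpa [hV01, hV21] using e
  have hU11' : blk V 1 1 * (blk V 1 1)ᴴ = 1 := quat_mul_eq_one_comm hU11
  have hV12 : blk V 1 2 = 0 := by
    have e := hu 1 2
    simp only [hV01, hV21, conjTranspose_zero, zero_mul, mul_zero, add_zero, zero_add,
      if_neg (by decide : ¬ (1 : Fin 3) = 2)] at e
    calc blk V 1 2 = (blk V 1 1 * (blk V 1 1)ᴴ) * blk V 1 2 := by rw [hU11', one_mul]
      _ = blk V 1 1 * ((blk V 1 1)ᴴ * blk V 1 2) := by rw [mul_assoc]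
      _ = 0 := by rw [e, mul_zero]
  -- equality of the diagonal blocks
  have hEq1 : blk V 1 1 = blk V 0 0 := by
    have e := hb 0 1
    simpa [blk_tri00, blk_tri01, blk_tri02, blk_tri10, blk_tri11, blk_tri12, blk_tri20, blk_tri21, blk_tri22, hV01, hV21] using e
  have hEq2 : blk V 2 2 = blk V 1 1 := by
    have e := hb 1 2
    simpa [blk_tri00, blk_tri01, blk_tri02, blk_tri10, blk_tri11, blk_tri12, blk_tri20, blk_tri21, blk_tri22, hV10, hV12] using e
  -- the intertwining relation
  have hAV : A * blk V 0 0 = blk V 0 0 * B := by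
    have e := hb 0 2
    simp only [blk_tri00, blk_tri01, blk_tri02, blk_tri10, blk_tri11, blk_tri12, blk_tri20, blk_tri21, blk_tri22, hV02, hV12, hV01,
      smul_mul_assoc, mul_zero, zero_mul, zero_add, add_zero, smul_zero, mul_one] at e
    rw [hEq2, hEq1] at e
    exact e
  have hAB : (blk V 0 0)ᴴ * A * blk V 0 0 = B := by
    rw [mul_assoc, hAV, ← mul_assoc, hU00, one_mul]
  refine ⟨blk V 0 0, hU00, hAB, ?_⟩
  have hpq : ∀ p q : Fin 3, blk V p q = if p = q then blk V 0 0 else 0 := by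
    intro p q
    fin_cases p <;> fin_cases q <;>
      simp [hV10, hV20, hV21, hV01, hV02, hV12, hEq1, hEq2]
  funext x y
  obtain ⟨p, i⟩ := x
  obtain ⟨q, j⟩ := y
  have := congrFun (congrFun (hpq p q) i) j
  by_cases h : p = q <;> simpa [blk, h] using this

theorem reverse_lemma {n : ℕ} (A B : Matrix (Fin n) (Fin n) ℍ[ℝ])
    (U : Matrix (Fin n) (Fin n) ℍ[ℝ]) (hU : IsUnitaryM U) (hAB : A = Uᴴ * B * U) :
    UnitarilySimilar (triBlock A) (triBlock B) := by
  set V : Matrix (Fin 3 × Fin n) (Fin 3 × Fin n) ℍ[ℝ] :=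
    fun x y => if x.1 = y.1 then U x.2 y.2 else 0 with hVdef
  have hblkV : ∀ p q : Fin 3, blk V p q = if p = q then U else 0 := by
    intro p q
    funext i j
    by_cases h : p = q <;> simp [blk, hVdef, h]
  have hUeq : Uᴴ * U = 1 := hU
  have hVu : IsUnitaryM V := by
    show Vᴴ * V = 1
    apply blk_ext
    intro p q
    rw [blk_mul, blk_conjTranspose, blk_conjTranspose, blk_conjTranspose, blk_one]
    fin_cases p <;> fin_cases q <;> simp [hblkV, hUeq]
  refine ⟨V, hVu, ?_⟩
  apply blk_ext
  intro p q
  rw [mul_assoc, blk_mul, blk_conjTranspose, blk_conjTranspose, blk_conjTranspose,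
    blk_mul, blk_mul, blk_mul]
  fin_cases p <;> fin_cases q <;>
    simp [hblkV, blk_tri00, blk_tri01, blk_tri02, blk_tri10, blk_tri11, blk_tri12,
      blk_tri20, blk_tri21, blk_tri22, hUeq, hAB, mul_assoc, mul_smul_comm,
      smul_mul_assoc, ← mul_assoc]

/-- `M_A` and `M_B` are unitarily similar iff `A` and `B` are; moreover every unitary `V`
with `Vᴴ M_A V = M_B` is of the form `V = V₁ ⊕ V₁ ⊕ V₁` with `V₁` unitary and
`V₁ᴴ A V₁ = B`. -/
theorem triBlock_unitarily_similar_iff {n : ℕ} (A B : Matrix (Fin n) (Fin n) ℍ[ℝ]) :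
    (UnitarilySimilar (triBlock A) (triBlock B) ↔ UnitarilySimilar A B) ∧
    (∀ V : Matrix (Fin 3 × Fin n) (Fin 3 × Fin n) ℍ[ℝ], IsUnitaryM V →
      Vᴴ * triBlock A * V = triBlock B →
      ∃ V₁ : Matrix (Fin n) (Fin n) ℍ[ℝ], IsUnitaryM V₁ ∧ V₁ᴴ * A * V₁ = B ∧
        V = fun x y => if x.1 = y.1 then V₁ x.2 y.2 else 0) := by
  constructor
  · constructor
    · rintro ⟨V, hVu, hsim⟩
      obtain ⟨V₁, h1, h2, -⟩ := key_lemma B A V hVu hsim.symm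
      exact ⟨V₁, h1, h2.symm⟩
    · rintro ⟨U, hU, hAB⟩
      exact reverse_lemma A B U hU hAB
  · intro V hVu hsim
    exact key_lemma A B V hVu hsim
end
end

section
/- For an n×n quaternion matrix M, define the 2n×2n matrices E = [[0, I_n],[0, 0]] and F_M = [[0, M],[0, 0]]. Then for n×n quaternion matrices M and N, the pairs (E, F_M) and (E, F_N) are simultaneously unitarily similar (there exists a quaternion unitary V with V*EV = E and V*F_M V = F_N) if and only if M is unitarily similar to N. -/
open Matrix
open scoped Quaternion

noncomputable section

/-- The matrix `E = [[0, I],[0, 0]]`. -/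
def matE (n : ℕ) : Matrix (Fin n ⊕ Fin n) (Fin n ⊕ Fin n) ℍ[ℝ] :=
  Matrix.fromBlocks 0 1 0 0

/-- The matrix `F_M = [[0, M],[0, 0]]`. -/
def matFM {n : ℕ} (M : Matrix (Fin n) (Fin n) ℍ[ℝ]) :
    Matrix (Fin n ⊕ Fin n) (Fin n ⊕ Fin n) ℍ[ℝ] :=
  Matrix.fromBlocks 0 M 0 0

/-- In the finite-dimensional real algebra of quaternion matrices, a left inverse is a
right inverse. -/
theorem mul_eq_one_comm_quat_s15 {m : Type*} [Fintype m] [DecidableEq m]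
    (a b : Matrix m m ℍ[ℝ]) (h : a * b = 1) : b * a = 1 := by
  have h1 : LinearMap.mulLeft ℝ a * LinearMap.mulLeft ℝ b = 1 :=
    LinearMap.ext fun x => by
      simp only [Module.End.mul_apply, LinearMap.mulLeft_apply, Module.End.one_apply,
        ← Matrix.mul_assoc, h, Matrix.one_mul]
  have h2 := mul_eq_one_comm.mp h1
  have := congrArg (fun f : Matrix m m ℍ[ℝ] →ₗ[ℝ] _ => f 1) h2
  simpa [Module.End.mul_apply] using this

/-- **Theorem 3.2(d), key gadget.** The pairs `(E, F_M)` and `(E, F_N)` are simultaneously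
unitarily similar iff `M` and `N` are unitarily similar. -/
theorem nilpotent_pair_unitarily_similar_iff {n : ℕ}
    (M N : Matrix (Fin n) (Fin n) ℍ[ℝ]) :
    (∃ V : Matrix (Fin n ⊕ Fin n) (Fin n ⊕ Fin n) ℍ[ℝ],
        IsUnitaryM V ∧ Vᴴ * matE n * V = matE n ∧ Vᴴ * matFM M * V = matFM N) ↔
      UnitarilySimilar M N := by
  constructor
  · rintro ⟨V, hV, hE, hF⟩
    have hV' : Vᴴ * V = 1 := hV
    have hVV : V * Vᴴ = 1 := mul_eq_one_comm_quat_s15 _ _ hV'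
    set A := V.toBlocks₁₁ with hA
    set B := V.toBlocks₁₂ with hB
    set C := V.toBlocks₂₁ with hCdef
    set D := V.toBlocks₂₂ with hDdef
    have hVb : V = fromBlocks A B C D := (fromBlocks_toBlocks V).symm
    have hEV : matE n * V = V * matE n := by
      calc matE n * V = V * (Vᴴ * matE n * V) := by
            rw [← Matrix.mul_assoc, ← Matrix.mul_assoc, hVV, Matrix.one_mul]
        _ = V * matE n := by rw [hE]
    have hC : C = 0 := by
      have := congrArg Matrix.toBlocks₁₁ hEV
      simpa [hVb, matE, fromBlocks_multiply] using this
    have hD : D = A := by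
      have := congrArg Matrix.toBlocks₁₂ hEV
      simpa [hVb, matE, fromBlocks_multiply] using this
    have hAA : Aᴴ * A = 1 := by
      have := congrArg Matrix.toBlocks₁₁ hV'
      simpa [hVb, hC, fromBlocks_conjTranspose, fromBlocks_multiply, ← fromBlocks_one]
        using this
    have hFV : matFM M * V = V * matFM N := by
      calc matFM M * V = V * (Vᴴ * matFM M * V) := by
            rw [← Matrix.mul_assoc, ← Matrix.mul_assoc, hVV, Matrix.one_mul]
        _ = V * matFM N := by rw [hF]
    have hMA : M * A = A * N := by
      have := congrArg Matrix.toBlocks₁₂ hFV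
      simpa [hVb, hC, hD, matFM, fromBlocks_multiply] using this
    have hAAh : A * Aᴴ = 1 := mul_eq_one_comm_quat_s15 _ _ hAA
    refine ⟨Aᴴ, ?_, ?_⟩
    · show (Aᴴ)ᴴ * Aᴴ = 1
      rw [conjTranspose_conjTranspose]; exact hAAh
    · show M = (Aᴴ)ᴴ * N * Aᴴ
      rw [conjTranspose_conjTranspose]
      calc M = M * (A * Aᴴ) := by rw [hAAh, Matrix.mul_one]
        _ = (M * A) * Aᴴ := by rw [Matrix.mul_assoc]
        _ = A * N * Aᴴ := by rw [hMA]
  · rintro ⟨U, hU, hMN⟩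
    have hU' : Uᴴ * U = 1 := hU
    have hUU : U * Uᴴ = 1 := mul_eq_one_comm_quat_s15 _ _ hU'
    have key : U * M * Uᴴ = N := by
      rw [hMN]
      calc U * (Uᴴ * N * U) * Uᴴ = (U * Uᴴ) * N * (U * Uᴴ) := by
            simp only [Matrix.mul_assoc]
        _ = N := by rw [hUU, Matrix.one_mul, Matrix.mul_one]
    refine ⟨fromBlocks Uᴴ 0 0 Uᴴ, ?_, ?_, ?_⟩
    · show (fromBlocks Uᴴ 0 0 Uᴴ)ᴴ * fromBlocks Uᴴ 0 0 Uᴴ = 1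
      simp [fromBlocks_conjTranspose, fromBlocks_multiply, hUU, ← fromBlocks_one]
    · simp [matE, fromBlocks_conjTranspose, fromBlocks_multiply, hUU]
    · simp [matFM, fromBlocks_conjTranspose, fromBlocks_multiply, Matrix.mul_assoc,
        ← Matrix.mul_assoc U M Uᴴ, key]
end
end
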